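/- Let p be a prime number, let J and r be positive integers, and let G be a finite group containing a normal abelian subgroup à of index at most J such that à can be generated by r elements. Then G contains a normal abelian subgroup A that can be generated by at most r elements, whose order is coprime to p, and whose index in G is at most J·|G_p|, where G_p is a p-Sylow subgroup of G. -/

import Mathlib

/-- If a finite group `G` contains a normal abelian subgroup `A₀` of index at most `J`
generated by `r` elements, then `G` contains a normal abelian subgroup `A` generated by at
most `r` elements, of order coprime to `p` and of index at most `J * |G_p|`, where `G_p` is
a `p`-Sylow subgroup of `G`. -/
theorem normal_abelian_coprime_of_normal_abelian
    (p : ℕ) (hp : p.Prime) (J r : ℕ) (hJ : 0 < J) (hr : 0 < r)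
    (G : Type*) [Group G] [Finite G]
    (A₀ : Subgroup G) (hnorm : A₀.Normal) (hcomm : IsMulCommutative A₀)
    (hindex : A₀.index ≤ J)
    (hgen : ∃ S : Finset ↥A₀, S.card ≤ r ∧ Subgroup.closure (S : Set ↥A₀) = ⊤)
    (Gp : Sylow p G) :
    ∃ A : Subgroup G, A.Normal ∧ IsMulCommutative A ∧
      (∃ S : Finset ↥A, S.card ≤ r ∧ Subgroup.closure (S : Set ↥A) = ⊤) ∧
      Nat.Coprime (Nat.card A) p ∧
      A.index ≤ J * Nat.card Gp := by
  haveI : Fact p.Prime := ⟨hp⟩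
  set k : ℕ := (Nat.card ↥A₀).factorization p with hk
  set n : ℕ := p ^ k with hn
  have hcardA₀ : (Nat.card ↥A₀) ≠ 0 := Nat.card_pos.ne'
  -- the homomorphism x ↦ x^n from A₀ to G
  let φ : ↥A₀ →* G := open IsMulCommutative in A₀.subtype.comp (powMonoidHom n)
  set A : Subgroup G := φ.range with hA
  have hmem : ∀ x : G, x ∈ A ↔ ∃ b : ↥A₀, ((b : G)) ^ n = x := by
    intro x; constructor
    · rintro ⟨b, rfl⟩; exact ⟨b, rfl⟩
    · rintro ⟨b, rfl⟩; exact ⟨b, rfl⟩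
  have hle : A ≤ A₀ := by
    rintro x ⟨b, rfl⟩
    exact A₀.pow_mem b.2 n
  refine ⟨A, ?_, ?_, ?_, ?_, ?_⟩
  · -- normal
    constructor
    intro a ha g
    rw [hmem] at ha ⊢
    obtain ⟨b, rfl⟩ := ha
    exact ⟨⟨g * b * g⁻¹, hnorm.conj_mem b b.2 g⟩, by simp [conj_pow]⟩
  · -- commutative
    exact ⟨⟨fun a b => Subtype.ext
      (Subgroup.mul_comm_of_mem_isMulCommutative A₀ (hle a.2) (hle b.2))⟩⟩
  · -- generators
    classical
    obtain ⟨S, hScard, hSgen⟩ := hgen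
    refine ⟨S.image φ.rangeRestrict, le_trans (Finset.card_image_le) hScard, ?_⟩
    have hsurj : Function.Surjective φ.rangeRestrict := φ.rangeRestrict_surjective
    rw [Finset.coe_image, ← MonoidHom.map_closure, hSgen,
      ← MonoidHom.range_eq_map, MonoidHom.range_eq_top]
    exact hsurj
  · -- coprime
    rw [Nat.coprime_comm, hp.coprime_iff_not_dvd]
    intro hdvd
    obtain ⟨g, hg⟩ := exists_prime_orderOf_dvd_card' (G := ↥A) p hdvd
    obtain ⟨b, hb⟩ := (hmem (g : G)).mp g.2
    have h1 : ((g : G)) ^ (ordCompl[p] (Nat.card ↥A₀)) = 1 := by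
      rw [← hb, ← pow_mul, ← hn]
      have : n * ordCompl[p] (Nat.card ↥A₀) = Nat.card ↥A₀ :=
        Nat.ordProj_mul_ordCompl_eq_self _ p
      rw [this]
      have : b ^ (Nat.card ↥A₀) = 1 := pow_card_eq_one'
      calc ((b : G)) ^ Nat.card ↥A₀ = ((b ^ Nat.card ↥A₀ : ↥A₀) : G) := by push_cast; ring_nf
        _ = 1 := by rw [this]; rfl
    have h2 : orderOf (g : G) ∣ ordCompl[p] (Nat.card ↥A₀) := orderOf_dvd_of_pow_eq_one h1
    rw [Subgroup.orderOf_coe, hg] at h2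
    exact hp.one_lt.ne' ((Nat.coprime_ordCompl hp hcardA₀).eq_one_of_dvd h2)
  · -- index
    have key : A.relIndex A₀ ≤ Nat.card Gp := by
      have hpQ : IsPGroup p (A₀ ⧸ A.subgroupOf A₀) := by
        intro q
        refine ⟨k, ?_⟩
        obtain ⟨b, rfl⟩ := QuotientGroup.mk_surjective q
        rw [← QuotientGroup.mk_pow, QuotientGroup.eq_one_iff]
        show (((b ^ p ^ k : ↥A₀)) : G) ∈ A
        rw [hmem]
        exact ⟨b, by push_cast; rfl⟩
      obtain ⟨m, hm⟩ := IsPGroup.iff_card.mp hpQ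
      have hrel : A.relIndex A₀ = p ^ m := by
        rw [Subgroup.relIndex, Subgroup.index, hm]
      have hdvd : p ^ m ∣ Nat.card G := by
        rw [← hrel]
        exact (Subgroup.relIndex_dvd_index_of_le hle).trans A.index_dvd_card
      rw [hrel, Gp.card_eq_multiplicity]
      exact Nat.pow_le_pow_right hp.pos
        ((Nat.Prime.pow_dvd_iff_le_factorization hp Nat.card_pos.ne').mp hdvd)
    calc A.index = A.relIndex A₀ * A₀.index := (Subgroup.relIndex_mul_index hle).symm
      _ ≤ Nat.card Gp * J := Nat.mul_le_mul key hindex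
      _ = J * Nat.card Gp := Nat.mul_comm _ _
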